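/- For every n ≥ 1, the sum over all compositions c = (c_1,…,c_k) of n of the total rank ∑_{j=1}^{k} j · c_j satisfies 4 · ∑_{c} ∑_{j} j·c_j = n·(n+3)·2^{n−1}. Equivalently, the average rank of a uniformly random one of the n elements of a uniformly random composition of n equals (n+3)/4. -/

import Mathlib

open Finset Nat

/-- total rank -/
def TR (l : List ℕ) : ℕ := ∑ i ∈ Finset.range l.length, (i + 1) * l.getD i 0

lemma sum_getD (l : List ℕ) : ∑ i ∈ Finset.range l.length, l.getD i 0 = l.sum := by
  induction l with
  | nil => simp
  | cons a t ih =>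
    rw [List.length_cons, Finset.sum_range_succ']
    simp only [List.getD_cons_succ, List.getD_cons_zero]
    rw [ih, List.sum_cons, Nat.add_comm]

lemma TR_cons (a : ℕ) (l : List ℕ) : TR (a :: l) = a + l.sum + TR l := by
  unfold TR
  rw [List.length_cons, Finset.sum_range_succ']
  simp only [List.getD_cons_succ, List.getD_cons_zero, one_mul]
  have : ∀ i ∈ Finset.range l.length, (i + 1 + 1) * l.getD i 0
      = (i + 1) * l.getD i 0 + l.getD i 0 := by intro i _; ring
  rw [Finset.sum_congr rfl this, Finset.sum_add_distrib, sum_getD]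
  ring

def cons1 {m : ℕ} (c : Composition m) : Composition (m + 1) :=
  ⟨1 :: c.blocks, by
    intro i hi
    rcases List.mem_cons.1 hi with h | h
    · omega
    · exact c.blocks_pos h, by simp [c.blocks_sum, Nat.add_comm]⟩

def bump {m : ℕ} (c : Composition m) : Composition (m + 1) :=
  ⟨(c.blocks.headI + 1) :: c.blocks.tail, by
    intro i hi
    rcases List.mem_cons.1 hi with h | h
    · omega
    · exact c.blocks_pos (List.mem_of_mem_tail h), by
    rcases h : c.blocks with _ | ⟨a, t⟩
    · have := c.blocks_sum; rw [h] at this; simp at this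
      simp [h, ← this]
    · have := c.blocks_sum; rw [h] at this
      simp [h, ← this]; omega⟩

lemma blocks_ne_nil {m : ℕ} (hm : 1 ≤ m) (c : Composition m) : c.blocks ≠ [] := by
  intro h
  have := c.blocks_sum
  rw [h] at this
  simp at this
  omega

lemma bij {m : ℕ} (hm : 1 ≤ m) :
    Function.Bijective (Sum.elim (cons1 (m := m)) (bump (m := m))) := by
  constructor
  · rintro (c | c) (d | d) h <;> simp only [Sum.elim_inl, Sum.elim_inr] at h <;>
      have hb := congrArg Composition.blocks h
    · simp only [cons1, List.cons.injEq] at hb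
      exact congrArg Sum.inl (Composition.ext hb.2)
    · exfalso
      simp only [cons1, bump, List.cons.injEq] at hb
      rcases hd : d.blocks with _ | ⟨a, t⟩
      · exact blocks_ne_nil hm d hd
      · have hp : 0 < a := d.blocks_pos (hd ▸ List.mem_cons_self (a := a) (l := t))
        rw [hd] at hb; simp at hb; omega
    · exfalso
      simp only [cons1, bump, List.cons.injEq] at hb
      rcases hd : c.blocks with _ | ⟨a, t⟩
      · exact blocks_ne_nil hm c hd
      · have hp : 0 < a := c.blocks_pos (hd ▸ List.mem_cons_self (a := a) (l := t))
        rw [hd] at hb; simp at hb; omega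
    · simp only [bump, List.cons.injEq] at hb
      refine congrArg Sum.inr (Composition.ext ?_)
      rcases hc : c.blocks with _ | ⟨a, t⟩
      · exact absurd hc (blocks_ne_nil hm c)
      rcases hd : d.blocks with _ | ⟨b, s⟩
      · exact absurd hd (blocks_ne_nil hm d)
      rw [hc, hd] at hb
      simp at hb
      simp [hc, hd, hb.1, hb.2]
  · intro d
    rcases hd : d.blocks with _ | ⟨a, t⟩
    · exact absurd hd (blocks_ne_nil (by omega) d)
    have hsum := d.blocks_sum
    rw [hd] at hsum
    simp at hsum
    have hp : 0 < a := d.blocks_pos (hd ▸ List.mem_cons_self (a := a) (l := t))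
    rcases Nat.lt_or_ge a 2 with ha | ha
    · have ha1 : a = 1 := by omega
      refine ⟨Sum.inl ⟨t, ?_, ?_⟩, ?_⟩
      · intro i hi; exact d.blocks_pos (hd ▸ List.mem_cons_of_mem a hi)
      · omega
      · simp only [Sum.elim_inl]
        exact (Composition.ext (by simp [cons1, hd, ha1])).symm
    · refine ⟨Sum.inr ⟨(a - 1) :: t, ?_, ?_⟩, ?_⟩
      · intro i hi
        rcases List.mem_cons.1 hi with h | h
        · omega
        · exact d.blocks_pos (hd ▸ List.mem_cons_of_mem a h)
      · simp; omega
      · simp only [Sum.elim_inr]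
        refine (Composition.ext ?_).symm
        simp [bump, hd]
        omega

lemma key (n : ℕ) : 4 * ∑ c : Composition (n + 1), TR c.blocks
    = (n + 1) * (n + 4) * 2 ^ n := by
  induction n with
  | zero =>
    have h1 : ∀ c : Composition 1, c = Composition.single 1 one_pos := by
      intro c
      refine Composition.ext ?_
      rcases hc : c.blocks with _ | ⟨a, t⟩
      · exact absurd hc (blocks_ne_nil le_rfl c)
      have hsum := c.blocks_sum
      rw [hc] at hsum; simp at hsum
      have hp : 0 < a := c.blocks_pos (hc ▸ List.mem_cons_self (a := a) (l := t))
      have ha : a = 1 := by omega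
      have ht : t = [] := by
        have : t.sum = 0 := by omega
        rcases t with _ | ⟨b, s⟩
        · rfl
        · have : 0 < b := c.blocks_pos (hc ▸ List.mem_cons_of_mem a (List.mem_cons_self (a := b) (l := s)))
          simp at *; omega
      simp [Composition.single, hc, ha, ht]
    rw [Fintype.sum_eq_single (Composition.single 1 one_pos) (fun c h => absurd (h1 c) h)]
    simp [Composition.single, TR]
  | succ n ih =>
    have hbij := bij (m := n + 1) (le_add_self)
    have := Fintype.sum_bijective _ hbij
      (fun x => TR ((Sum.elim (cons1 (m := n+1)) (bump (m := n+1)) x).blocks))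
      (fun d => TR d.blocks) (fun x => rfl)
    rw [← this, Fintype.sum_sum_type]
    have e1 : ∀ c : Composition (n + 1), TR ((cons1 c).blocks) = 1 + (n + 1) + TR c.blocks := by
      intro c
      simp only [cons1]
      rw [TR_cons, c.blocks_sum]
    have e2 : ∀ c : Composition (n + 1), TR ((bump c).blocks) = 1 + TR c.blocks := by
      intro c
      rcases hc : c.blocks with _ | ⟨a, t⟩
      · exact absurd hc (blocks_ne_nil le_add_self c)
      simp only [bump, hc]
      simp only [List.headI, List.tail]
      rw [TR_cons, TR_cons]
      ring
    simp only [Sum.elim_inl, Sum.elim_inr, e1, e2, Finset.sum_add_distrib, Finset.sum_const, Finset.card_univ,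
      composition_card]
    simp only [smul_eq_mul, mul_one, Nat.add_sub_cancel]
    rw [show (4:ℕ) * (2^n + (2^n*n + 2^n) + (∑ x : Composition (n+1), TR x.blocks)
        + (2^n + ∑ x : Composition (n+1), TR x.blocks))
      = 2*(4 * ∑ x : Composition (n+1), TR x.blocks) + (n+3)*2^n*4 from by ring, ih]
    ring
theorem average_rank_unlabeled (n : ℕ) (hn : 1 ≤ n) :
    4 * ∑ c : Composition n,
        ∑ i ∈ Finset.range c.blocks.length, (i + 1) * c.blocks.getD i 0 =
      n * (n + 3) * 2 ^ (n - 1) := by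
  obtain ⟨m, rfl⟩ := Nat.exists_eq_add_of_le hn
  rw [Nat.add_comm 1 m]
  simpa [TR, show m + 1 + 3 = m + 4 by omega] using key m
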